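/- Let A, B ∈ F_q^{k×n} and let U = rowspace(I_k | A), V = rowspace(I_k | B) be the corresponding lifted subspaces of F_q^{k+n}. Then d_S(U,V) = 2·rank(A - B). Consequently, lifting a (k×n, d)_q rank-metric code yields a (k+n, 2d, {k})_q constant dimension code of the same cardinality. -/

import Mathlib

/-- The subspace distance `d_S(U,V) = dim(U+V) - dim(U∩V)` on subspaces of `F^ι`. -/
noncomputable def sdist {F : Type*} [Field F] {ι : Type*} (U V : Submodule F (ι → F)) : ℕ :=
  Module.finrank F ↥(U ⊔ V) - Module.finrank F ↥(U ⊓ V)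

/-- The lifting `A ↦ rowspace(I_k | A)` of a `k×n` matrix to a `k`-dimensional subspace
of `F_q^{k+n}`. -/
def liftSub {F : Type*} [Field F] {k n : ℕ} (A : Matrix (Fin k) (Fin n) F) :
    Submodule F (Fin k ⊕ Fin n → F) :=
  Submodule.span F (Set.range (Matrix.fromCols (1 : Matrix (Fin k) (Fin k) F) A))

section Aux

variable {F : Type*} [Field F] {k n : ℕ}

open Matrix in
lemma liftSub_eq_range (A : Matrix (Fin k) (Fin n) F) :
    liftSub A = LinearMap.range (Matrix.fromCols (1 : Matrix (Fin k) (Fin k) F) A).vecMulLinear :=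
  (range_vecMulLinear _).symm

open Matrix in
lemma vecMul_lift (A : Matrix (Fin k) (Fin n) F) (y : Fin k → F) :
    y ᵥ* Matrix.fromCols (1 : Matrix (Fin k) (Fin k) F) A = Sum.elim y (y ᵥ* A) := by
  rw [Matrix.vecMul_fromCols, Matrix.vecMul_one]

lemma rows_li (A : Matrix (Fin k) (Fin n) F) :
    LinearIndependent F (Matrix.fromCols (1 : Matrix (Fin k) (Fin k) F) A) := by
  apply LinearIndependent.of_comp (LinearMap.funLeft F F Sum.inl)
  have h : (LinearMap.funLeft F F Sum.inl) ∘ (Matrix.fromCols (1 : Matrix (Fin k) (Fin k) F) A)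
      = ⇑(Pi.basisFun F (Fin k)) := by
    funext i
    ext j
    change (Matrix.fromCols (1 : Matrix (Fin k) (Fin k) F) A) i (Sum.inl j) = _
    simp [Matrix.one_apply, Pi.single_apply, eq_comm]
  rw [h]
  exact (Pi.basisFun F (Fin k)).linearIndependent

lemma finrank_liftSub (A : Matrix (Fin k) (Fin n) F) :
    Module.finrank F ↥(liftSub A) = k := by
  rw [liftSub, finrank_span_eq_card (rows_li A), Fintype.card_fin]

open Matrix in
lemma liftSub_inf (A B : Matrix (Fin k) (Fin n) F) :
    liftSub A ⊓ liftSub B =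
      Submodule.map (Matrix.fromCols (1 : Matrix (Fin k) (Fin k) F) A).vecMulLinear
        (LinearMap.ker (A - B).vecMulLinear) := by
  ext x
  simp only [Submodule.mem_inf, liftSub_eq_range, LinearMap.mem_range, Submodule.mem_map,
    LinearMap.mem_ker, Matrix.vecMulLinear_apply, vecMul_lift]
  constructor
  · rintro ⟨⟨y, hy⟩, ⟨z, hz⟩⟩
    have hyz : y = z := by
      funext i
      have := congrFun (hy.trans hz.symm) (Sum.inl i)
      simpa using this
    refine ⟨y, ?_, hy⟩
    have hAB : y ᵥ* A = z ᵥ* B := by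
      funext j
      have := congrFun (hy.trans hz.symm) (Sum.inr j)
      simpa using this
    rw [Matrix.vecMul_sub, sub_eq_zero, hAB, ← hyz]
  · rintro ⟨y, hker, hy⟩
    have hAB : y ᵥ* A = y ᵥ* B := by
      rw [← sub_eq_zero, ← Matrix.vecMul_sub]; exact hker
    exact ⟨⟨y, hy⟩, ⟨y, by rw [← hAB]; exact hy⟩⟩

open Matrix in
lemma finrank_inf_add_rank (A B : Matrix (Fin k) (Fin n) F) :
    Module.finrank F ↥(liftSub A ⊓ liftSub B) + (A - B).rank = k := by
  rw [liftSub_inf]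
  have hinj : Function.Injective
      (Matrix.fromCols (1 : Matrix (Fin k) (Fin k) F) A).vecMulLinear := by
    rw [Matrix.coe_vecMulLinear]
    exact Matrix.vecMul_injective_iff.mpr (rows_li A)
  have heq := LinearEquiv.finrank_eq
    (Submodule.equivMapOfInjective _ hinj (LinearMap.ker (A - B).vecMulLinear))
  rw [← heq]
  have hr : (A - B).rank = Module.finrank F ↥(LinearMap.range (A - B).vecMulLinear) := by
    rw [range_vecMulLinear, Matrix.rank_eq_finrank_span_row]
  rw [hr, add_comm, LinearMap.finrank_range_add_finrank_ker, Module.finrank_pi,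
    Fintype.card_fin]

lemma sdist_liftSub (A B : Matrix (Fin k) (Fin n) F) :
    sdist (liftSub A) (liftSub B) = 2 * (A - B).rank := by
  have h1 := finrank_inf_add_rank A B
  have h2 := Submodule.finrank_sup_add_finrank_inf_eq (liftSub A) (liftSub B)
  rw [finrank_liftSub, finrank_liftSub] at h2
  unfold sdist
  omega

end Aux

/-- For `A, B ∈ F_q^{k×n}` and the lifted subspaces `U = rowspace(I_k|A)`,
`V = rowspace(I_k|B)` of `F_q^{k+n}`, one has `d_S(U,V) = 2·rank(A-B)`.
Consequently, lifting a `(k×n, d)_q` rank-metric code `M` yields a `(k+n, 2d, {k})_q`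
constant dimension code of the same cardinality: the lift is injective on `M`, every
lifted subspace has dimension `k`, and distinct codewords give subspaces at subspace
distance at least `2d`. -/
theorem lifted_rank_metric_code {F : Type*} [Field F] [Fintype F] {k n : ℕ}
    (M : Set (Matrix (Fin k) (Fin n) F)) (d : ℕ)
    (hM : ∀ A ∈ M, ∀ B ∈ M, A ≠ B → d ≤ (A - B).rank) :
    (∀ A B : Matrix (Fin k) (Fin n) F, sdist (liftSub A) (liftSub B) = 2 * (A - B).rank) ∧
    (∀ A : Matrix (Fin k) (Fin n) F, Module.finrank F ↥(liftSub A) = k) ∧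
    Set.InjOn (liftSub (F := F) (k := k) (n := n)) M ∧
    (∀ A ∈ M, ∀ B ∈ M, A ≠ B → 2 * d ≤ sdist (liftSub A) (liftSub B)) := by
  refine ⟨sdist_liftSub, finrank_liftSub, ?_, ?_⟩
  · intro A _ B _ h
    have h0 : sdist (liftSub A) (liftSub B) = 0 := by
      unfold sdist
      rw [h, sup_idem, inf_idem, Nat.sub_self]
    rw [sdist_liftSub] at h0
    have hrank : (A - B).rank = 0 := by omega
    rw [Matrix.rank_eq_finrank_span_row] at hrank
    have hbot := Submodule.finrank_eq_zero.mp hrank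
    have : ∀ i, (A - B) i = 0 := by
      intro i
      have : (A - B) i ∈ Submodule.span F (Set.range (A - B)) :=
        Submodule.subset_span ⟨i, rfl⟩
      rw [show Submodule.span F (Set.range (A - B)) = ⊥ from hbot] at this
      simpa using this
    have : A - B = 0 := by
      ext i j
      have := congrFun (this i) j
      simpa using this
    rw [← sub_eq_zero]
    exact this
  · intro A hA B hB hAB
    rw [sdist_liftSub]
    exact Nat.mul_le_mul_left 2 (hM A hA B hB hAB)
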